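/- If G is a group, H ≤ G is a subgroup of finite index, and H is bounded (i.e., every conjugation-invariant norm on H has finite diameter), then G is bounded. More concretely: if ν is a conjugation-invariant norm on G whose restriction to H has finite diameter, then ν has finite diameter on G. -/
import Mathlib


/-- A conjugation-invariant norm on a group `G`. -/
structure ConjInvNorm (G : Type*) [Group G] where
  ν : G → ℝ
  nonneg : ∀ g, 0 ≤ ν g
  eq_zero_iff : ∀ g, ν g = 0 ↔ g = 1
  inv_eq : ∀ g, ν g⁻¹ = ν g
  subadd : ∀ g h, ν (g * h) ≤ ν g + ν h
  conj_inv : ∀ g h, ν (h⁻¹ * g * h) = ν g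

/-- A group is bounded if every conjugation-invariant norm on it has finite diameter. -/
def IsBoundedGroup (G : Type*) [Group G] : Prop :=
  ∀ ν : ConjInvNorm G, ∃ C : ℝ, ∀ g, ν.ν g ≤ C

/-- A finite index subgroup being bounded implies the ambient group is bounded. -/
theorem bounded_of_finiteIndex_bounded (G : Type*) [Group G] (H : Subgroup G)
    [H.FiniteIndex] (hH : IsBoundedGroup H) : IsBoundedGroup G := by
  intro ν
  -- restrict to H
  let νH : ConjInvNorm H :=
    { ν := fun h => ν.ν (h : G)
      nonneg := fun h => ν.nonneg _
      eq_zero_iff := fun h => by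
        rw [ν.eq_zero_iff]
        exact ⟨fun e => Subtype.ext e, fun e => by rw [e]; rfl⟩
      inv_eq := fun h => ν.inv_eq _
      subadd := fun g h => ν.subadd _ _
      conj_inv := fun g h => ν.conj_inv _ _ }
  obtain ⟨C, hC⟩ := hH νH
  have : Finite (G ⧸ H) := H.finite_quotient_of_finiteIndex
  have : Fintype (G ⧸ H) := Fintype.ofFinite _
  set M : ℝ := Finset.univ.sup' (by simp [Finset.univ_nonempty]) (fun q : G ⧸ H => ν.ν q.out)
  refine ⟨M + C, fun g => ?_⟩
  obtain ⟨h, hh⟩ := QuotientGroup.mk_out_eq_mul H g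
  have hg : g = (QuotientGroup.mk g : G ⧸ H).out * (h : G)⁻¹ := by
    rw [hh]; group
  calc ν.ν g ≤ ν.ν (QuotientGroup.mk g : G ⧸ H).out + ν.ν ((h : G)⁻¹) := by
        nth_rewrite 1 [hg]; exact ν.subadd _ _
    _ ≤ M + C := by
        refine add_le_add (Finset.le_sup' (fun q : G ⧸ H => ν.ν q.out) (Finset.mem_univ _)) ?_
        rw [ν.inv_eq]
        exact hC h
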